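/- Let Γ be a finite set containing two distinct points a and b, and let λ : Γ → [0, ∞) satisfy λ(a) = λ(b). Let Ψ be a random element of ℤ≥0^Γ with E[Σ_{α∈Γ} Ψ(α)] < ∞ satisfying E[B_0 g(Ψ)] = 0 for every bounded function g : ℤ≥0^Γ → ℝ, and suppose P[Ψ = δ_a] = P[Ψ = δ_b]. Write |Ψ| = Σ_{α∈Γ} Ψ(α) and |λ| = Σ_{α∈Γ} λ(α). Then for every bounded function f : ℤ≥0 → ℝ, E[ |λ| (f(|Ψ|+1) − f(|Ψ|)) + |Ψ| (f(|Ψ|−1) − f(|Ψ|)) ] = −P[Ψ = δ_a] · (f(2) − 2 f(1) + f(0)). -/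

import Mathlib

open MeasureTheory

/-- The configuration with exactly one point at `a`. -/
def deltaAt {Γ : Type*} [DecidableEq Γ] (a : Γ) : Γ → ℕ := fun x => if x = a then 1 else 0

/-- The Poisson point process Stein operator
`A g(ξ) = Σ_α λ(α)[g(ξ+δ_α) − g(ξ)] + Σ_α ξ(α)[g(ξ−δ_α) − g(ξ)]`. -/
noncomputable def ppSteinA {Γ : Type*} [Fintype Γ] [DecidableEq Γ] (lam : Γ → ℝ)
    (g : (Γ → ℕ) → ℝ) (ξ : Γ → ℕ) : ℝ :=
  (∑ α, lam α * (g (ξ + deltaAt α) - g ξ)) + ∑ α, (ξ α : ℝ) * (g (ξ - deltaAt α) - g ξ)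

/-- The perturbed Poisson point process Stein operator `B_0`, perturbed at the
configurations `δ_a` and `δ_b`. -/
noncomputable def ppSteinB {Γ : Type*} [Fintype Γ] [DecidableEq Γ] (lam : Γ → ℝ) (a b : Γ)
    (g : (Γ → ℕ) → ℝ) (ξ : Γ → ℕ) : ℝ :=
  ppSteinA lam g ξ
    + (1 / 2) * (if ξ = deltaAt a then (1 : ℝ) else 0) * (g (ξ + deltaAt b) - g ξ)
    + (1 / 2) * (if ξ = deltaAt b then (1 : ℝ) else 0) * (g (ξ + deltaAt a) - g ξ)
    + (1 / 2) * (if ξ = deltaAt a then (1 : ℝ) else 0) * (g (ξ - deltaAt a) - g ξ)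
    + (1 / 2) * (if ξ = deltaAt b then (1 : ℝ) else 0) * (g (ξ - deltaAt b) - g ξ)

section
variable {Γ : Type*} [Fintype Γ] [DecidableEq Γ]

lemma sum_deltaAt (a : Γ) : ∑ x, deltaAt a x = 1 := by
  simp [deltaAt]

lemma sum_add_deltaAt (ξ : Γ → ℕ) (a : Γ) : ∑ x, (ξ + deltaAt a) x = (∑ x, ξ x) + 1 := by
  simp [Finset.sum_add_distrib, sum_deltaAt]

lemma sum_sub_deltaAt (ξ : Γ → ℕ) (a : Γ) (h : 1 ≤ ξ a) :
    ∑ x, (ξ - deltaAt a) x = (∑ x, ξ x) - 1 := by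
  have hle : ∀ x, deltaAt a x ≤ ξ x := by
    intro x; by_cases hx : x = a <;> simp [deltaAt, hx]; omega
  have : ∑ x, ((ξ - deltaAt a) x + deltaAt a x) = ∑ x, ξ x := by
    apply Finset.sum_congr rfl; intro x _
    simp [Nat.sub_add_cancel (hle x)]
  rw [Finset.sum_add_distrib, sum_deltaAt] at this
  omega

lemma deltaAt_ne (a b : Γ) (hab : a ≠ b) : deltaAt a ≠ deltaAt b := by
  intro h
  have := congrFun h a
  simp [deltaAt, hab] at this

lemma steinA_count (lam : Γ → ℝ) (f : ℕ → ℝ) (ξ : Γ → ℕ) :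
    ppSteinA lam (fun η => f (∑ x, η x)) ξ =
      (∑ α, lam α) * (f ((∑ x, ξ x) + 1) - f (∑ x, ξ x)) +
        (∑ α, (ξ α : ℝ)) * (f ((∑ x, ξ x) - 1) - f (∑ x, ξ x)) := by
  unfold ppSteinA
  beta_reduce
  congr 1
  · rw [Finset.sum_mul]
    apply Finset.sum_congr rfl; intro α _
    rw [sum_add_deltaAt]
  · rw [Finset.sum_mul]
    apply Finset.sum_congr rfl; intro α _
    by_cases hα : ξ α = 0
    · simp [hα]
    · rw [sum_sub_deltaAt ξ α (by omega)]

lemma steinB_count (lam : Γ → ℝ) (a b : Γ) (hab : a ≠ b) (f : ℕ → ℝ) (ξ : Γ → ℕ) :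
    ppSteinB lam a b (fun η => f (∑ x, η x)) ξ =
      ((∑ α, lam α) * (f ((∑ x, ξ x) + 1) - f (∑ x, ξ x)) +
        (∑ α, (ξ α : ℝ)) * (f ((∑ x, ξ x) - 1) - f (∑ x, ξ x))) +
      ((if ξ = deltaAt a then (1:ℝ) else 0) + (if ξ = deltaAt b then 1 else 0)) *
        ((f 2 - 2 * f 1 + f 0) / 2) := by
  unfold ppSteinB
  rw [steinA_count]
  beta_reduce
  by_cases hξa : ξ = deltaAt a
  · have hξb : ξ ≠ deltaAt b := by rw [hξa]; exact deltaAt_ne a b hab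
    subst hξa
    have h1 : deltaAt a a = 1 := by simp [deltaAt]
    rw [if_pos rfl, if_neg hξb]
    simp only [sum_add_deltaAt, sum_deltaAt, sum_sub_deltaAt (deltaAt a) a (by omega)]
    ring
  · by_cases hξb : ξ = deltaAt b
    · subst hξb
      have h1 : deltaAt b b = 1 := by simp [deltaAt]
      rw [if_neg hξa, if_pos rfl]
      simp only [sum_add_deltaAt, sum_deltaAt, sum_sub_deltaAt (deltaAt b) b (by omega)]
      ring
    · rw [if_neg hξa, if_neg hξb]; ring
end

/-- In the setting of the perturbed Poisson point process, the total number
of points `|Ψ| = Σ_α Ψ(α)` satisfies, for every bounded `f : ℕ → ℝ`,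
`E[|λ|(f(|Ψ|+1) − f(|Ψ|)) + |Ψ|(f(|Ψ|−1) − f(|Ψ|))] = −P[Ψ = δ_a](f(2) − 2f(1) + f(0))`. -/
theorem pp_perturbed_total_count_identity
    {Ω : Type*} [MeasurableSpace Ω] (P : Measure Ω) [IsProbabilityMeasure P]
    {Γ : Type*} [Fintype Γ] [DecidableEq Γ] (a b : Γ) (hab : a ≠ b)
    (lam : Γ → ℝ) (hlam : ∀ α, 0 ≤ lam α) (hlamab : lam a = lam b)
    (Ψ : Ω → Γ → ℕ) (hΨ : Measurable Ψ)
    (hint : Integrable (fun ω => ∑ α, (Ψ ω α : ℝ)) P)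
    (hstein : ∀ g : (Γ → ℕ) → ℝ, (∃ C : ℝ, ∀ ξ, |g ξ| ≤ C) →
      ∫ ω, ppSteinB lam a b g (Ψ ω) ∂P = 0)
    (hsym : P {ω | Ψ ω = deltaAt a} = P {ω | Ψ ω = deltaAt b}) :
    ∀ f : ℕ → ℝ, (∃ C : ℝ, ∀ n, |f n| ≤ C) →
      ∫ ω, ((∑ α, lam α) * (f ((∑ α, Ψ ω α) + 1) - f (∑ α, Ψ ω α)) +
          (∑ α, (Ψ ω α : ℝ)) * (f ((∑ α, Ψ ω α) - 1) - f (∑ α, Ψ ω α))) ∂P =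
        -(P {ω | Ψ ω = deltaAt a}).toReal * (f 2 - 2 * f 1 + f 0) := by
  intro f hf
  obtain ⟨C, hC⟩ := hf
  have hC0 : 0 ≤ C := le_trans (abs_nonneg _) (hC 0)
  set K : ℝ := f 2 - 2 * f 1 + f 0 with hK
  -- every real function of a configuration is measurable
  have hmeas : ∀ F : (Γ → ℕ) → ℝ, Measurable fun ω => F (Ψ ω) :=
    fun F => (measurable_of_countable F).comp hΨ
  -- the two main pieces
  set h1 : Ω → ℝ := fun ω => (∑ α, lam α) * (f ((∑ α, Ψ ω α) + 1) - f (∑ α, Ψ ω α)) +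
      (∑ α, (Ψ ω α : ℝ)) * (f ((∑ α, Ψ ω α) - 1) - f (∑ α, Ψ ω α)) with hh1
  set h2 : Ω → ℝ := fun ω =>
      ((if Ψ ω = deltaAt a then (1:ℝ) else 0) + (if Ψ ω = deltaAt b then (1:ℝ) else 0)) * (K / 2)
    with hh2
  -- apply the Stein identity to g = f ∘ total count
  have h0 := hstein (fun η => f (∑ x, η x)) ⟨C, fun ξ => hC _⟩
  have hpt : (fun ω => ppSteinB lam a b (fun η => f (∑ x, η x)) (Ψ ω)) =
      fun ω => h1 ω + h2 ω := by
    funext ω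
    rw [steinB_count lam a b hab f (Ψ ω)]
  rw [hpt] at h0
  -- integrability of h1
  have hint1 : Integrable h1 P := by
    refine Integrable.mono' ((integrable_const (|∑ α, lam α| * (2*C))).add
      (hint.const_mul (2*C))) (Measurable.aestronglyMeasurable
        (((measurable_of_countable (fun ξ : Γ → ℕ =>
          (∑ α, lam α) * (f ((∑ α, ξ α) + 1) - f (∑ α, ξ α)) +
          (∑ α, (ξ α : ℝ)) * (f ((∑ α, ξ α) - 1) - f (∑ α, ξ α)))).comp hΨ))) ?_
    filter_upwards with ω
    have hb : ∀ m n : ℕ, |f m - f n| ≤ 2 * C := by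
      intro m n
      calc |f m - f n| ≤ |f m| + |f n| := abs_sub _ _
        _ ≤ C + C := add_le_add (hC m) (hC n)
        _ = 2 * C := by ring
    have hΨ0 : (0:ℝ) ≤ ∑ α, (Ψ ω α : ℝ) :=
      Finset.sum_nonneg fun α _ => Nat.cast_nonneg _
    calc |h1 ω| ≤ |(∑ α, lam α) * (f ((∑ α, Ψ ω α) + 1) - f (∑ α, Ψ ω α))| +
          |(∑ α, (Ψ ω α : ℝ)) * (f ((∑ α, Ψ ω α) - 1) - f (∑ α, Ψ ω α))| := abs_add_le _ _
      _ ≤ |∑ α, lam α| * (2*C) + (∑ α, (Ψ ω α : ℝ)) * (2*C) := by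
          rw [abs_mul, abs_mul, abs_of_nonneg hΨ0]
          exact add_le_add (mul_le_mul_of_nonneg_left (hb _ _) (abs_nonneg _))
            (mul_le_mul_of_nonneg_left (hb _ _) hΨ0)
      _ = |∑ α, lam α| * (2*C) + (2*C) * ∑ α, (Ψ ω α : ℝ) := by ring
  -- integrability and integrals of indicators
  have hma : MeasurableSet {ω | Ψ ω = deltaAt a} := hΨ (measurableSet_singleton (deltaAt a))
  have hmb : MeasurableSet {ω | Ψ ω = deltaAt b} := hΨ (measurableSet_singleton (deltaAt b))
  have hindeq : ∀ (c : Γ), (fun ω => if Ψ ω = deltaAt c then (1:ℝ) else 0) =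
      Set.indicator {ω | Ψ ω = deltaAt c} (fun _ => (1:ℝ)) := by
    intro c; funext ω
    by_cases h : Ψ ω = deltaAt c <;> simp [Set.indicator, h]
  have hia : Integrable (fun ω => if Ψ ω = deltaAt a then (1:ℝ) else 0) P := by
    rw [hindeq a]; exact (integrable_const 1).indicator hma
  have hib : Integrable (fun ω => if Ψ ω = deltaAt b then (1:ℝ) else 0) P := by
    rw [hindeq b]; exact (integrable_const 1).indicator hmb
  have hIia : ∫ ω, (if Ψ ω = deltaAt a then (1:ℝ) else 0) ∂P =
      (P {ω | Ψ ω = deltaAt a}).toReal := by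
    rw [hindeq a, integral_indicator_const (1:ℝ) hma, smul_eq_mul, mul_one]; rfl
  have hIib : ∫ ω, (if Ψ ω = deltaAt b then (1:ℝ) else 0) ∂P =
      (P {ω | Ψ ω = deltaAt b}).toReal := by
    rw [hindeq b, integral_indicator_const (1:ℝ) hmb, smul_eq_mul, mul_one]; rfl
  have hint2 : Integrable h2 P := ((hia.add hib).mul_const (K/2))
  -- split the integral
  rw [integral_add hint1 hint2] at h0
  have hI2 : ∫ ω, h2 ω ∂P = (P {ω | Ψ ω = deltaAt a}).toReal * K := by
    rw [hh2]
    rw [integral_mul_const, integral_add hia hib, hIia, hIib, ← hsym]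
    ring
  rw [hI2] at h0
  linarith
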